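/- arXiv:1610.01857 — 2 statements merged into one kernel-verified Lean document; each statement's English description precedes it below -/
import Mathlib

section
/- Let P be an n×n row-stochastic matrix and let p ∈ ℝⁿ be a strictly positive stationary vector (pᵀ P = pᵀ). Let ℒ = I − (Π^{1/2} P Π^{-1/2} + Π^{-1/2} Pᵀ Π^{1/2})/2 be the directed graph Laplacian. Then for every z ∈ ℝⁿ, writing y_i = z_i / √(p_i), one has zᵀ ℒ z = (1/2) Σ_{i,j} p_i P_{ij} (y_i − y_j)². -/
open Matrix

/-- Quadratic form of the directed graph Laplacian: for `y i = z i / √(p i)`,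
`zᵀ ℒ z = (1/2) ∑_{i,j} p i * P i j * (y i - y j)²`. -/
theorem stmt_14 (n : ℕ) (P : Matrix (Fin n) (Fin n) ℝ)
    (hPnn : ∀ i j, 0 ≤ P i j) (hProw : P.mulVec (fun _ => (1 : ℝ)) = fun _ => (1 : ℝ))
    (p : Fin n → ℝ) (hp : ∀ i, 0 < p i) (hstat : Matrix.vecMul p P = p)
    (Pihalf Piinvhalf : Matrix (Fin n) (Fin n) ℝ)
    (hPihalf : Pihalf = Matrix.diagonal (fun i => Real.sqrt (p i)))
    (hPiinvhalf : Piinvhalf = Matrix.diagonal (fun i => (Real.sqrt (p i))⁻¹))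
    (L : Matrix (Fin n) (Fin n) ℝ)
    (hL : L = 1 - (1 / 2 : ℝ) • (Pihalf * P * Piinvhalf + Piinvhalf * Pᵀ * Pihalf))
    (z y : Fin n → ℝ) (hy : y = fun i => z i / Real.sqrt (p i)) :
    z ⬝ᵥ L.mulVec z = (1 / 2) * ∑ i, ∑ j, p i * P i j * (y i - y j) ^ 2 := by
  subst hL hPihalf hPiinvhalf
  have hs : ∀ i, Real.sqrt (p i) ≠ 0 := fun i => ne_of_gt (Real.sqrt_pos.2 (hp i))
  have hsq : ∀ i, Real.sqrt (p i) ^ 2 = p i := fun i => Real.sq_sqrt (hp i).le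
  have hz : ∀ i, z i = Real.sqrt (p i) * y i := by
    intro i; rw [hy]; field_simp
    rw [mul_div_cancel_right₀ _ (hs i)]
  have hrow : ∀ i, ∑ j, P i j = 1 := by
    intro i
    have := congrFun hProw i
    simpa [Matrix.mulVec, dotProduct] using this
  have hcol : ∀ j, ∑ i, p i * P i j = p j := by
    intro j
    have := congrFun hstat j
    simpa [Matrix.vecMul, dotProduct] using this
  have key : ∀ i j, z i * (((1 : Matrix (Fin n) (Fin n) ℝ) - (1 / 2 : ℝ) •
      (Matrix.diagonal (fun i => Real.sqrt (p i)) * P * Matrix.diagonal (fun i => (Real.sqrt (p i))⁻¹)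
        + Matrix.diagonal (fun i => (Real.sqrt (p i))⁻¹) * Pᵀ * Matrix.diagonal (fun i => Real.sqrt (p i)))) i j * z j)
      = (if i = j then Real.sqrt (p i) ^ 2 * y i ^ 2 else 0)
        - (1 / 2) * (Real.sqrt (p i) ^ 2 * P i j * (y i * y j)
          + Real.sqrt (p j) ^ 2 * P j i * (y i * y j)) := by
    intro i j
    rw [hz i, hz j]
    by_cases h : i = j
    · subst h
      simp only [Matrix.sub_apply, Matrix.one_apply_eq, Matrix.smul_apply, Matrix.add_apply,
        Matrix.diagonal_mul, Matrix.mul_diagonal, Matrix.transpose_apply, smul_eq_mul, if_pos rfl]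
      field_simp [hs i]
      rw [if_pos trivial]
      ring
    · simp only [Matrix.sub_apply, Matrix.one_apply, Matrix.smul_apply, Matrix.add_apply,
        Matrix.diagonal_mul, Matrix.mul_diagonal, Matrix.transpose_apply, smul_eq_mul, if_neg h]
      field_simp [hs i, hs j]
      ring
  have lhs_eq : z ⬝ᵥ (((1 : Matrix (Fin n) (Fin n) ℝ) - (1 / 2 : ℝ) •
      (Matrix.diagonal (fun i => Real.sqrt (p i)) * P * Matrix.diagonal (fun i => (Real.sqrt (p i))⁻¹)
        + Matrix.diagonal (fun i => (Real.sqrt (p i))⁻¹) * Pᵀ * Matrix.diagonal (fun i => Real.sqrt (p i))))).mulVec z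
      = ∑ i, ∑ j, ((if i = j then p i * y i ^ 2 else 0)
        - (1 / 2) * (p i * P i j * (y i * y j) + p j * P j i * (y i * y j))) := by
    simp only [dotProduct, Matrix.mulVec, Finset.mul_sum]
    refine Finset.sum_congr rfl fun i _ => Finset.sum_congr rfl fun j _ => ?_
    rw [key i j, hsq i, hsq j]
  rw [lhs_eq]
  have h1 : ∑ i, ∑ j, (if i = j then p i * y i ^ 2 else 0) = ∑ i, p i * y i ^ 2 := by
    refine Finset.sum_congr rfl fun i _ => ?_
    simp
  have hswap : ∑ i, ∑ j, p j * P j i * (y i * y j) = ∑ i, ∑ j, p i * P i j * (y i * y j) := by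
    rw [Finset.sum_comm]
    exact Finset.sum_congr rfl fun i _ => Finset.sum_congr rfl fun j _ => by ring
  have hA : ∑ i, ∑ j, p i * P i j * y i ^ 2 = ∑ i, p i * y i ^ 2 := by
    refine Finset.sum_congr rfl fun i _ => ?_
    calc ∑ j, p i * P i j * y i ^ 2 = (p i * y i ^ 2) * ∑ j, P i j := by
          rw [Finset.mul_sum]; exact Finset.sum_congr rfl fun j _ => by ring
      _ = p i * y i ^ 2 := by rw [hrow i]; ring
  have hB : ∑ i, ∑ j, p i * P i j * y j ^ 2 = ∑ j, p j * y j ^ 2 := by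
    rw [Finset.sum_comm]
    refine Finset.sum_congr rfl fun j _ => ?_
    calc ∑ i, p i * P i j * y j ^ 2 = (∑ i, p i * P i j) * y j ^ 2 := by
          rw [Finset.sum_mul]
      _ = p j * y j ^ 2 := by rw [hcol j]
  have hexp : ∀ i j, p i * P i j * (y i - y j) ^ 2
      = p i * P i j * y i ^ 2 + p i * P i j * y j ^ 2 - 2 * (p i * P i j * (y i * y j)) :=
    fun i j => by ring
  simp only [hexp, Finset.sum_sub_distrib, Finset.sum_add_distrib, hA, hB, h1,
    ← Finset.mul_sum, hswap]
  try ring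
end

section
/- Let P be an n×n row-stochastic matrix (nonnegative entries, each row sums to 1) and let p ∈ ℝⁿ be a strictly positive stationary vector (pᵀ P = pᵀ). Then the directed graph Laplacian ℒ = I − (Π^{1/2} P Π^{-1/2} + Π^{-1/2} Pᵀ Π^{1/2})/2 is positive semidefinite: zᵀ ℒ z ≥ 0 for all z ∈ ℝⁿ. -/
open Matrix

/-- The directed graph Laplacian of a row-stochastic matrix with strictly positive
stationary vector is positive semidefinite. -/
theorem stmt_15 (n : ℕ) (P : Matrix (Fin n) (Fin n) ℝ)
    (hPnn : ∀ i j, 0 ≤ P i j) (hProw : P.mulVec (fun _ => (1 : ℝ)) = fun _ => (1 : ℝ))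
    (p : Fin n → ℝ) (hp : ∀ i, 0 < p i) (hstat : Matrix.vecMul p P = p)
    (Pihalf Piinvhalf : Matrix (Fin n) (Fin n) ℝ)
    (hPihalf : Pihalf = Matrix.diagonal (fun i => Real.sqrt (p i)))
    (hPiinvhalf : Piinvhalf = Matrix.diagonal (fun i => (Real.sqrt (p i))⁻¹))
    (L : Matrix (Fin n) (Fin n) ℝ)
    (hL : L = 1 - (1 / 2 : ℝ) • (Pihalf * P * Piinvhalf + Piinvhalf * Pᵀ * Pihalf)) :
    ∀ z : Fin n → ℝ, 0 ≤ z ⬝ᵥ L.mulVec z := by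
  intro z
  subst hL hPihalf hPiinvhalf
  set s : Fin n → ℝ := fun i => Real.sqrt (p i) with hs
  have hsp : ∀ i, 0 < s i := fun i => Real.sqrt_pos.2 (hp i)
  have hs2 : ∀ i, s i * s i = p i := fun i => Real.mul_self_sqrt (hp i).le
  have hrow : ∀ i, ∑ j, P i j = 1 := by
    intro i
    have := congrFun hProw i
    simpa [mulVec, dotProduct] using this
  have hst : ∀ j, ∑ i, p i * P i j = p j := by
    intro j
    have := congrFun hstat j
    simpa [vecMul, dotProduct] using this
  set A : Matrix (Fin n) (Fin n) ℝ :=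
    Matrix.diagonal s * P * Matrix.diagonal (fun i => (s i)⁻¹) with hA
  have hAapp : ∀ i j, A i j = s i * P i j * (s j)⁻¹ := by
    intro i j
    simp [hA, Matrix.mul_diagonal, Matrix.diagonal_mul, mul_comm, mul_assoc, mul_left_comm]
  have hBtrans : Matrix.diagonal (fun i => (s i)⁻¹) * Pᵀ * Matrix.diagonal s = Aᵀ := by
    ext i j
    simp [hA, Matrix.mul_diagonal, Matrix.diagonal_mul, Matrix.transpose_apply]
    ring
  have hQT : z ⬝ᵥ Aᵀ.mulVec z = z ⬝ᵥ A.mulVec z := by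
    rw [Matrix.dotProduct_mulVec, Matrix.vecMul_transpose, dotProduct_comm,
      Matrix.dotProduct_mulVec]
  have hform : z ⬝ᵥ (1 - (1 / 2 : ℝ) • (A + Aᵀ)).mulVec z
      = (∑ i, z i ^ 2) - z ⬝ᵥ A.mulVec z := by
    rw [Matrix.sub_mulVec, dotProduct_sub, Matrix.smul_mulVec,
      dotProduct_smul, Matrix.add_mulVec, dotProduct_add, hQT]
    rw [Matrix.one_mulVec]
    have : z ⬝ᵥ z = ∑ i, z i ^ 2 := by simp [dotProduct, pow_two]
    rw [this, smul_eq_mul]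
    ring
  have hQ : z ⬝ᵥ A.mulVec z = ∑ i, ∑ j, z i * z j * (s i * P i j * (s j)⁻¹) := by
    simp only [dotProduct, mulVec, Finset.mul_sum]
    refine Finset.sum_congr rfl fun i _ => Finset.sum_congr rfl fun j _ => ?_
    rw [hAapp]
    ring
  rw [hBtrans, hform, sub_nonneg, hQ]
  -- termwise bound
  have hterm : ∀ i j, z i * z j * (s i * P i j * (s j)⁻¹)
      ≤ P i j * ((z i ^ 2 + (p i / p j) * z j ^ 2) / 2) := by
    intro i j
    have hab : z i * ((s i / s j) * z j) ≤ (z i ^ 2 + ((s i / s j) * z j) ^ 2) / 2 := by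
      nlinarith [sq_nonneg (z i - (s i / s j) * z j)]
    have h2 : ((s i / s j) * z j) ^ 2 = (p i / p j) * z j ^ 2 := by
      rw [mul_pow, div_pow, pow_two, pow_two, hs2, hs2]
    have := mul_le_mul_of_nonneg_left (h2 ▸ hab) (hPnn i j)
    calc z i * z j * (s i * P i j * (s j)⁻¹)
        = P i j * (z i * ((s i / s j) * z j)) := by ring
      _ ≤ P i j * ((z i ^ 2 + (p i / p j) * z j ^ 2) / 2) := this
  calc ∑ i, ∑ j, z i * z j * (s i * P i j * (s j)⁻¹)
      ≤ ∑ i, ∑ j, P i j * ((z i ^ 2 + (p i / p j) * z j ^ 2) / 2) :=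
        Finset.sum_le_sum fun i _ => Finset.sum_le_sum fun j _ => hterm i j
    _ = (∑ i, ∑ j, P i j * z i ^ 2) / 2 + (∑ i, ∑ j, P i j * ((p i / p j) * z j ^ 2)) / 2 := by
        rw [Finset.sum_div, Finset.sum_div, ← Finset.sum_add_distrib]
        refine Finset.sum_congr rfl fun i _ => ?_
        rw [Finset.sum_div, Finset.sum_div, ← Finset.sum_add_distrib]
        refine Finset.sum_congr rfl fun j _ => ?_
        ring
    _ = (∑ i, z i ^ 2) / 2 + (∑ i, z i ^ 2) / 2 := by
        congr 1
        · congr 1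
          refine Finset.sum_congr rfl fun i _ => ?_
          rw [← Finset.sum_mul, hrow, one_mul]
        · congr 1
          rw [Finset.sum_comm]
          refine Finset.sum_congr rfl fun j _ => ?_
          have : ∑ i, P i j * ((p i / p j) * z j ^ 2)
              = (∑ i, p i * P i j) * (z j ^ 2 / p j) := by
            rw [Finset.sum_mul]
            refine Finset.sum_congr rfl fun i _ => ?_
            field_simp
          rw [this, hst]
          rw [mul_comm, div_mul_cancel₀ _ (hp j).ne']
    _ = ∑ i, z i ^ 2 := by ring
end
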